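/- If fᵢ'' satisfies 0 < m ≤ fᵢ''(s) ≤ 2u for all s and all i, then for F(x) = ∑ᵢ fᵢ(xᵢ) restricted to the hyperplane {x : 1ᵀx = c}, the condition ‖∇F(x) - (1ᵀ∇F(x)/n)1‖ ≤ δ implies ‖x - x*‖ ≤ δ/m, where x* is the minimizer of F over the hyperplane. -/

import Mathlib

open BigOperators

/-- Strong convexity converts small gradient disagreement into distance to optimum. -/
theorem stmt_16 (n : ℕ) (hn : 0 < n)
    (f : Fin n → ℝ → ℝ) (m u : ℝ) (hm : 0 < m) (hmu : m ≤ 2 * u)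
    (hC2 : ∀ i, ContDiff ℝ 2 (f i))
    (hf'' : ∀ i s, m ≤ deriv (deriv (f i)) s ∧ deriv (deriv (f i)) s ≤ 2 * u)
    (c : ℝ) (x xstar : Fin n → ℝ)
    (hxfeas : (∑ i, x i) = c) (hstarfeas : (∑ i, xstar i) = c)
    (hstarmin : ∀ z : Fin n → ℝ, (∑ i, z i) = c →
      (∑ i, f i (xstar i)) ≤ ∑ i, f i (z i))
    (φ : Fin n → ℝ)
    (hφ : ∀ i, φ i = deriv (f i) (x i) - (∑ j, deriv (f j) (x j)) / n)
    (δ : ℝ) (hδ : 0 ≤ δ)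
    (hsmall : Real.sqrt (∑ i, φ i ^ 2) ≤ δ) :
    Real.sqrt (∑ i, (x i - xstar i) ^ 2) ≤ δ / m := by
  classical
  -- basic differentiability facts
  have hdiff : ∀ i, Differentiable ℝ (f i) := fun i =>
    (hC2 i).differentiable (by norm_num)
  have hC1d : ∀ i, Differentiable ℝ (deriv (f i)) := by
    intro i
    have h2 : ContDiff ℝ ((1 : ℕ) + 1) (f i) := by
      have := hC2 i; norm_num at this ⊢; exact this
    have := (contDiff_succ_iff_deriv.mp h2).2.2
    exact this.differentiable (by norm_num)
  set d : Fin n → ℝ := fun i => x i - xstar i with hd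
  have hdsum : (∑ i, d i) = 0 := by
    simp only [hd, Finset.sum_sub_distrib, hxfeas, hstarfeas, sub_self]
  -- strong monotonicity of each deriv (f i)
  have mono : ∀ (i : Fin n) (a b : ℝ),
      m * (a - b) ^ 2 ≤ (deriv (f i) a - deriv (f i) b) * (a - b) := by
    intro i a b
    have hg : Monotone (fun s => deriv (f i) s - m * s) := by
      apply monotone_of_deriv_nonneg
      · exact (hC1d i).sub (differentiable_const m |>.mul differentiable_id)
      · intro s
        have hds : HasDerivAt (fun s => deriv (f i) s - m * s)
            (deriv (deriv (f i)) s - m) s := by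
          exact ((hC1d i s).hasDerivAt).sub
            (((hasDerivAt_id s).const_mul m).congr_deriv (by ring))
        rw [hds.deriv]
        linarith [(hf'' i s).1]
    rcases le_total a b with hab | hab
    · have := hg hab
      simp only at this
      nlinarith
    · have := hg hab
      simp only at this
      nlinarith
  -- first-order optimality: ∑ deriv (f i) (xstar i) * d i = 0
  have hopt : (∑ i, deriv (f i) (xstar i) * d i) = 0 := by
    set g : ℝ → ℝ := fun t => ∑ i, f i (xstar i + t * d i) with hg
    have hgd : HasDerivAt g (∑ i, deriv (f i) (xstar i) * d i) 0 := by
      have : HasDerivAt g (∑ i, deriv (f i) (xstar i + 0 * d i) * d i) 0 := by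
        apply HasDerivAt.fun_sum
        intro i _
        have hinner : HasDerivAt (fun t : ℝ => xstar i + t * d i) (d i) 0 := by
          simpa using ((hasDerivAt_id (0:ℝ)).mul_const (d i)).const_add (xstar i)
        exact ((hdiff i _).hasDerivAt).comp 0 hinner
      simpa using this
    have hmin : IsLocalMin g 0 := by
      apply IsMinOn.isLocalMin (s := Set.univ)
      · intro t _
        show g 0 ≤ g t
        have hg0 : g 0 = ∑ i, f i (xstar i) := by simp [hg]
        rw [hg0]
        apply hstarmin
        rw [Finset.sum_add_distrib, hstarfeas, ← Finset.mul_sum, hdsum]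
        simp
      · exact Filter.univ_mem
    have := hmin.deriv_eq_zero
    rwa [hgd.deriv] at this
  -- key inequality: m * ∑ d² ≤ ∑ φ d
  have key : m * (∑ i, d i ^ 2) ≤ ∑ i, φ i * d i := by
    have h1 : (∑ i, φ i * d i) = ∑ i, deriv (f i) (x i) * d i := by
      rw [show (∑ i, φ i * d i)
          = (∑ i, deriv (f i) (x i) * d i)
            - (∑ j, deriv (f j) (x j)) / n * (∑ i, d i) by
        rw [Finset.mul_sum, ← Finset.sum_sub_distrib]
        exact Finset.sum_congr rfl fun i _ => by rw [hφ i]; ring]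
      rw [hdsum]; ring
    have h2 : (∑ i, deriv (f i) (x i) * d i)
        = (∑ i, (deriv (f i) (x i) - deriv (f i) (xstar i)) * d i)
          + ∑ i, deriv (f i) (xstar i) * d i := by
      rw [← Finset.sum_add_distrib]
      exact Finset.sum_congr rfl fun i _ => by ring
    rw [h1, h2, hopt, add_zero, Finset.mul_sum]
    apply Finset.sum_le_sum
    intro i _
    have := mono i (x i) (xstar i)
    simpa [hd] using this
  -- Cauchy–Schwarz
  have hcs : (∑ i, φ i * d i)
      ≤ Real.sqrt (∑ i, φ i ^ 2) * Real.sqrt (∑ i, d i ^ 2) :=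
    Real.sum_mul_le_sqrt_mul_sqrt _ _ _
  have hS : (0:ℝ) ≤ ∑ i, d i ^ 2 := Finset.sum_nonneg fun i _ => sq_nonneg _
  have hsqS : Real.sqrt (∑ i, d i ^ 2) ^ 2 = ∑ i, d i ^ 2 := Real.sq_sqrt hS
  have hsqnn : 0 ≤ Real.sqrt (∑ i, d i ^ 2) := Real.sqrt_nonneg _
  have hchain : m * (∑ i, d i ^ 2) ≤ δ * Real.sqrt (∑ i, d i ^ 2) := by
    calc m * (∑ i, d i ^ 2) ≤ ∑ i, φ i * d i := key
      _ ≤ Real.sqrt (∑ i, φ i ^ 2) * Real.sqrt (∑ i, d i ^ 2) := hcs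
      _ ≤ δ * Real.sqrt (∑ i, d i ^ 2) := by
          exact mul_le_mul_of_nonneg_right hsmall hsqnn
  have hgoal : Real.sqrt (∑ i, (x i - xstar i) ^ 2)
      = Real.sqrt (∑ i, d i ^ 2) := rfl
  rw [hgoal, le_div_iff₀ hm]
  rcases eq_or_lt_of_le hsqnn with h0 | h0
  · rw [← h0]; simpa using hδ
  · have := mul_le_mul_of_nonneg_right hchain (le_of_lt (inv_pos.mpr h0))
    nlinarith [hsqS, h0]
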